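/- Let 0 < λ < 1 and set λ₊ = (1 + √λ)² and λ₋ = (1 − √λ)². Then the definite integral ∫_{λ₋}^{λ₊} √((λ₊ − x)(x − λ₋)) / x² dx equals 2πλ/(1 − λ). -/

import Mathlib

open Real Set

lemma mp_key (r : ℝ) (hr0 : 0 < r) (hr1 : r < 1) :
    ∫ x in ((1-r)^2)..((1+r)^2),
        Real.sqrt (((1+r)^2 - x) * (x - (1-r)^2)) / x ^ 2
      = 2 * Real.pi * r^2 / (1 - r^2) := by
  have h1r : (0:ℝ) < 1 - r := by linarith
  have h1r2 : (0:ℝ) < 1 - r^2 := by nlinarith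
  set a : ℝ := (1-r)^2 with ha
  set b : ℝ := (1+r)^2 with hb
  have ha0 : 0 < a := by positivity
  have hab : a < b := by rw [ha, hb]; nlinarith
  set F : ℝ → ℝ := fun y =>
    -(Real.sqrt ((b - y) * (y - a)) / y) - Real.arcsin ((y - (1+r^2))/(2*r))
      + (1+r^2)/(1-r^2) * Real.arcsin (((1+r^2) - (1-r^2)^2 * y⁻¹)/(2*r)) with hF
  have hcont : ContinuousOn F (Icc a b) := by
    apply ContinuousOn.add
    apply ContinuousOn.sub
    · apply ContinuousOn.neg
      apply ContinuousOn.div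
      · exact (((continuous_const.sub continuous_id).mul
          (continuous_id.sub continuous_const)).sqrt).continuousOn
      · exact continuousOn_id
      · intro y hy; exact ne_of_gt (lt_of_lt_of_le ha0 hy.1)
    · exact (Real.continuous_arcsin.comp
        (((continuous_id.sub continuous_const)).div_const _)).continuousOn
    · apply ContinuousOn.mul continuousOn_const
      apply Real.continuous_arcsin.comp_continuousOn
      apply ContinuousOn.div_const
      apply ContinuousOn.sub continuousOn_const
      apply ContinuousOn.mul continuousOn_const
      exact ContinuousOn.inv₀ continuousOn_id
        (fun y hy => ne_of_gt (lt_of_lt_of_le ha0 hy.1))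
  have hint : IntervalIntegrable
      (fun x => Real.sqrt ((b - x) * (x - a)) / x ^ 2) MeasureTheory.volume a b := by
    apply ContinuousOn.intervalIntegrable
    apply ContinuousOn.div
    · exact (((continuous_const.sub continuous_id).mul
        (continuous_id.sub continuous_const)).sqrt).continuousOn
    · exact (continuous_pow 2).continuousOn
    · intro y hy
      rw [uIcc_of_le hab.le] at hy
      exact pow_ne_zero 2 (ne_of_gt (lt_of_lt_of_le ha0 hy.1))
  have hderiv : ∀ x ∈ Ioo a b,
      HasDerivAt F (Real.sqrt ((b - x) * (x - a)) / x ^ 2) x := by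
    intro x hx
    have hx0 : 0 < x := lt_trans ha0 hx.1
    have hRpos : 0 < (b - x) * (x - a) := by
      apply mul_pos <;> [linarith [hx.2]; linarith [hx.1]]
    set s : ℝ := Real.sqrt ((b - x) * (x - a)) with hs
    have hs0 : 0 < s := Real.sqrt_pos.mpr hRpos
    have hs2 : s ^ 2 = (b - x) * (x - a) := Real.sq_sqrt hRpos.le
    -- derivative of sqrt part
    have hR : HasDerivAt (fun y => (b - y) * (y - a)) ((-1)*(x-a) + (b-x)*1) x :=
      (((hasDerivAt_id x).const_sub b)).mul ((hasDerivAt_id x).sub_const a)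
    have hsq : HasDerivAt (fun y => Real.sqrt ((b - y) * (y - a)))
        (((-1)*(x-a) + (b-x)*1) / (2 * s)) x := hR.sqrt (ne_of_gt hRpos)
    have hg1 : HasDerivAt (fun y => Real.sqrt ((b - y) * (y - a)) / y)
        ((((-1)*(x-a) + (b-x)*1) / (2 * s) * x - s * 1) / x ^ 2) x :=
      hsq.div (hasDerivAt_id x) (ne_of_gt hx0)
    -- arcsin u
    have hu1 : (x - (1+r^2))/(2*r) ≠ -1 := by
      apply ne_of_gt
      rw [lt_div_iff₀ (by positivity)]
      have := hx.1; rw [ha] at this; nlinarith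
    have hu2 : (x - (1+r^2))/(2*r) ≠ 1 := by
      apply ne_of_lt
      rw [div_lt_iff₀ (by positivity)]
      have := hx.2; rw [hb] at this; nlinarith
    have hiu : HasDerivAt (fun y => (y - (1+r^2))/(2*r)) (1/(2*r)) x := by
      simpa using ((hasDerivAt_id x).sub_const (1+r^2)).div_const (2*r)
    have harc1 : HasDerivAt (fun y => Real.arcsin ((y - (1+r^2))/(2*r)))
        (1 / Real.sqrt (1 - ((x - (1+r^2))/(2*r)) ^ 2) * (1/(2*r))) x :=
      (Real.hasDerivAt_arcsin hu1 hu2).comp (h₂ := Real.arcsin) x hiu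
    -- arcsin v
    have hxinv : x * x⁻¹ = 1 := mul_inv_cancel₀ (ne_of_gt hx0)
    have hv1 : ((1+r^2) - (1-r^2)^2 * x⁻¹)/(2*r) ≠ -1 := by
      apply ne_of_gt
      rw [lt_div_iff₀ (by positivity)]
      have h1 := hx.1; rw [ha] at h1
      have h2 : (1-r^2)^2 * x⁻¹ < (1+r)^2 := by
        rw [show (1-r^2)^2 * x⁻¹ = (1-r^2)^2 / x from (div_eq_mul_inv _ _).symm,
          div_lt_iff₀ hx0]
        nlinarith
      nlinarith [h2]
    have hv2 : ((1+r^2) - (1-r^2)^2 * x⁻¹)/(2*r) ≠ 1 := by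
      apply ne_of_lt
      rw [div_lt_iff₀ (by positivity)]
      have h2b := hx.2; rw [hb] at h2b
      have h2 : (1-r)^2 < (1-r^2)^2 * x⁻¹ := by
        rw [show (1-r^2)^2 * x⁻¹ = (1-r^2)^2 / x from (div_eq_mul_inv _ _).symm,
          lt_div_iff₀ hx0]
        nlinarith
      nlinarith [h2]
    have hiv : HasDerivAt (fun y => ((1+r^2) - (1-r^2)^2 * y⁻¹)/(2*r))
        (-((1-r^2)^2 * (-(x^2)⁻¹))/(2*r)) x := by
      exact (((hasDerivAt_inv (ne_of_gt hx0)).const_mul ((1-r^2)^2)).const_sub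
        (1+r^2)).div_const (2*r)
    have harc2 : HasDerivAt
        (fun y => Real.arcsin (((1+r^2) - (1-r^2)^2 * y⁻¹)/(2*r)))
        (1 / Real.sqrt (1 - (((1+r^2) - (1-r^2)^2 * x⁻¹)/(2*r)) ^ 2)
          * (-((1-r^2)^2 * (-(x^2)⁻¹))/(2*r))) x :=
      (Real.hasDerivAt_arcsin hv1 hv2).comp (h₂ := Real.arcsin) x hiv
    have hFd : HasDerivAt F
        (-((((-1)*(x-a) + (b-x)*1) / (2 * s) * x - s * 1) / x ^ 2)
          - (1 / Real.sqrt (1 - ((x - (1+r^2))/(2*r)) ^ 2) * (1/(2*r)))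
          + (1+r^2)/(1-r^2) *
            (1 / Real.sqrt (1 - (((1+r^2) - (1-r^2)^2 * x⁻¹)/(2*r)) ^ 2)
              * (-((1-r^2)^2 * (-(x^2)⁻¹))/(2*r)))) x :=
      (hg1.neg.sub harc1).add (harc2.const_mul _)
    convert hFd using 1
    -- simplify the sqrt expressions
    have hs2' : s ^ 2 = ((1+r)^2 - x) * (x - (1-r)^2) := by rw [hs2, ha, hb]
    have e1 : 1 - ((x - (1+r^2))/(2*r)) ^ 2 = (s/(2*r)) ^ 2 := by
      field_simp
      linear_combination (-1) * hs2'
    have e2 : 1 - (((1+r^2) - (1-r^2)^2 * x⁻¹)/(2*r)) ^ 2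
        = ((1-r^2) * s/(2*r*x)) ^ 2 := by
      field_simp
      linear_combination (-(1-r^2)^2) * hs2'
    rw [e1, e2, Real.sqrt_sq (by positivity), Real.sqrt_sq (by positivity)]
    rw [ha, hb]
    field_simp
    linear_combination (0:ℝ) * hs2'
  have := intervalIntegral.integral_eq_sub_of_hasDerivAt_of_le hab.le hcont hderiv hint
  rw [this]
  simp only [hF]
  have hRb : Real.sqrt ((b - b) * (b - a)) = 0 := by simp
  have hRa : Real.sqrt ((b - a) * (a - a)) = 0 := by simp
  have hub : (b - (1+r^2))/(2*r) = 1 := by rw [hb]; field_simp; ring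
  have hua : (a - (1+r^2))/(2*r) = -1 := by rw [ha]; field_simp; ring
  have hvb : ((1+r^2) - (1-r^2)^2 * b⁻¹)/(2*r) = 1 := by
    rw [hb]; rw [div_eq_one_iff_eq (by positivity)]
    have : ((1:ℝ)+r)^2 ≠ 0 := by positivity
    field_simp
    ring
  have hva : ((1+r^2) - (1-r^2)^2 * a⁻¹)/(2*r) = -1 := by
    rw [ha, div_eq_iff (by positivity)]
    have : ((1:ℝ)-r)^2 ≠ 0 := by positivity
    field_simp
    ring
  rw [hRb, hRa, hub, hua, hvb, hva, Real.arcsin_one, Real.arcsin_neg_one]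
  field_simp
  ring

/-- For `0 < λ < 1` with Marchenko–Pastur edges `λ₊ = (1 + √λ)²` and
`λ₋ = (1 − √λ)²`, we have `∫_{λ₋}^{λ₊} √((λ₊ − x)(x − λ₋))/x² dx = 2πλ/(1 − λ)`. -/
theorem mp_integral (lam : ℝ) (hlam0 : 0 < lam) (hlam1 : lam < 1)
    (lamPlus lamMinus : ℝ)
    (hPlus : lamPlus = (1 + Real.sqrt lam) ^ 2)
    (hMinus : lamMinus = (1 - Real.sqrt lam) ^ 2) :
    ∫ x in lamMinus..lamPlus,
        Real.sqrt ((lamPlus - x) * (x - lamMinus)) / x ^ 2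
      = 2 * Real.pi * lam / (1 - lam) := by
  have hr0 : 0 < Real.sqrt lam := Real.sqrt_pos.mpr hlam0
  have hr1 : Real.sqrt lam < 1 := by
    rw [show (1:ℝ) = Real.sqrt 1 by simp]
    exact Real.sqrt_lt_sqrt hlam0.le hlam1
  have hsq : Real.sqrt lam ^ 2 = lam := Real.sq_sqrt hlam0.le
  have := mp_key (Real.sqrt lam) hr0 hr1
  rw [hsq] at this
  rw [hPlus, hMinus]
  exact this
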